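/- Let A be a compatible associative algebra and M a compatible A-bimodule. If f = (f₁, f₂) ∈ C²(A,M) ⊕ C²(A,M) is a 2-cocycle (δ₁f₁ = 0, δ₁f₂ + δ₂f₁ = 0, δ₂f₂ = 0), then A ⊕ M with products (a,m)·ᵢ(b,n) = (a·ᵢb, a·ᵢn + m·ᵢb + fᵢ(a,b)), i = 1,2, is a compatible associative algebra. -/
import Mathlib


/-- If `(f₁, f₂)` is a 2-cocycle of a compatible associative algebra `A` with values in a
compatible `A`-bimodule `M`, then `A ⊕ M` with the twisted products
`(a,m)·ᵢ(b,n) = (a·ᵢb, a·ᵢn + m·ᵢb + fᵢ(a,b))` is a compatible associative algebra. -/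
theorem twisted_semidirect_product_compatible
    {K A M : Type*} [Field K] [CharZero K]
    [AddCommGroup A] [Module K A] [AddCommGroup M] [Module K M]
    (μ₁ μ₂ : A →ₗ[K] A →ₗ[K] A)
    (h₁ : ∀ a b c : A, μ₁ (μ₁ a b) c = μ₁ a (μ₁ b c))
    (h₂ : ∀ a b c : A, μ₂ (μ₂ a b) c = μ₂ a (μ₂ b c))
    (hcomp : ∀ a b c : A,
      μ₂ (μ₁ a b) c + μ₁ (μ₂ a b) c = μ₁ a (μ₂ b c) + μ₂ a (μ₁ b c))
    (l₁ l₂ : A →ₗ[K] M →ₗ[K] M) (r₁ r₂ : M →ₗ[K] A →ₗ[K] M)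
    (hb₁l : ∀ (a b : A) (m : M), l₁ (μ₁ a b) m = l₁ a (l₁ b m))
    (hb₁m : ∀ (a b : A) (m : M), r₁ (l₁ a m) b = l₁ a (r₁ m b))
    (hb₁r : ∀ (a b : A) (m : M), r₁ (r₁ m a) b = r₁ m (μ₁ a b))
    (hb₂l : ∀ (a b : A) (m : M), l₂ (μ₂ a b) m = l₂ a (l₂ b m))
    (hb₂m : ∀ (a b : A) (m : M), r₂ (l₂ a m) b = l₂ a (r₂ m b))
    (hb₂r : ∀ (a b : A) (m : M), r₂ (r₂ m a) b = r₂ m (μ₂ a b))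
    (hm₁ : ∀ (a b : A) (m : M),
      l₂ (μ₁ a b) m + l₁ (μ₂ a b) m = l₁ a (l₂ b m) + l₂ a (l₁ b m))
    (hm₂ : ∀ (a b : A) (m : M),
      r₂ (l₁ a m) b + r₁ (l₂ a m) b = l₁ a (r₂ m b) + l₂ a (r₁ m b))
    (hm₃ : ∀ (a b : A) (m : M),
      r₂ (r₁ m a) b + r₁ (r₂ m a) b = r₁ m (μ₂ a b) + r₂ m (μ₁ a b))
    -- `(f₁, f₂)` is a 2-cocycle: `δ₁f₁ = 0`, `δ₁f₂ + δ₂f₁ = 0`, `δ₂f₂ = 0`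
    (f₁ f₂ : A →ₗ[K] A →ₗ[K] M)
    (hf₁ : ∀ a b c : A,
      l₁ a (f₁ b c) - f₁ (μ₁ a b) c + f₁ a (μ₁ b c) - r₁ (f₁ a b) c = 0)
    (hf₁₂ : ∀ a b c : A,
      (l₁ a (f₂ b c) - f₂ (μ₁ a b) c + f₂ a (μ₁ b c) - r₁ (f₂ a b) c)
        + (l₂ a (f₁ b c) - f₁ (μ₂ a b) c + f₁ a (μ₂ b c) - r₂ (f₁ a b) c) = 0)
    (hf₂ : ∀ a b c : A,
      l₂ a (f₂ b c) - f₂ (μ₂ a b) c + f₂ a (μ₂ b c) - r₂ (f₂ a b) c = 0)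
    (P₁ P₂ : A × M → A × M → A × M)
    (hP₁ : ∀ (a b : A) (m n : M),
      P₁ (a, m) (b, n) = (μ₁ a b, l₁ a n + r₁ m b + f₁ a b))
    (hP₂ : ∀ (a b : A) (m n : M),
      P₂ (a, m) (b, n) = (μ₂ a b, l₂ a n + r₂ m b + f₂ a b)) :
    (∀ x y z : A × M, P₁ (P₁ x y) z = P₁ x (P₁ y z)) ∧
    (∀ x y z : A × M, P₂ (P₂ x y) z = P₂ x (P₂ y z)) ∧
    (∀ x y z : A × M,
      P₂ (P₁ x y) z + P₁ (P₂ x y) z = P₁ x (P₂ y z) + P₂ x (P₁ y z)) := by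
  refine ⟨?_, ?_, ?_⟩
  · rintro ⟨a, m⟩ ⟨b, n⟩ ⟨c, p⟩
    rw [hP₁, hP₁, hP₁, hP₁]
    refine Prod.ext (h₁ a b c) ?_
    simp only [map_add, LinearMap.add_apply]
    linear_combination (norm := abel)
      hb₁l a b p + hb₁m a c n + hb₁r b c m - hf₁ a b c
  · rintro ⟨a, m⟩ ⟨b, n⟩ ⟨c, p⟩
    rw [hP₂, hP₂, hP₂, hP₂]
    refine Prod.ext (h₂ a b c) ?_
    simp only [map_add, LinearMap.add_apply]
    linear_combination (norm := abel)
      hb₂l a b p + hb₂m a c n + hb₂r b c m - hf₂ a b c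
  · rintro ⟨a, m⟩ ⟨b, n⟩ ⟨c, p⟩
    rw [hP₁, hP₂, hP₁, hP₂, hP₂, hP₁, hP₂, hP₁]
    rw [Prod.mk_add_mk, Prod.mk_add_mk]
    refine Prod.ext (hcomp a b c) ?_
    simp only [map_add, LinearMap.add_apply]
    linear_combination (norm := abel)
      hm₁ a b p + hm₂ a c n + hm₃ b c m - hf₁₂ a b c
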